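/- arXiv:1010.1941 — 2 statements merged into one kernel-verified Lean document; each statement's English description precedes it below -/
import Mathlib

section
/- The generalized hypergeometric series ₃F₂(−5/2, 1/4, 3/4; 1/2, 1; 1) equals 1141/(960·√2·π) − (103/(256π))·ln((2−√2)/(2+√2)). -/
open Real Set Filter MeasureTheory

noncomputable def poch (a : ℝ) (n : ℕ) : ℝ := Polynomial.eval a (ascPochhammer ℝ n)

lemma poch_zero (a : ℝ) : poch a 0 = 1 := by simp [poch]

lemma poch_succ (a : ℝ) (n : ℕ) : poch a (n+1) = poch a n * (a + n) := by
  simp [poch, ascPochhammer_succ_eval]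

lemma poch_one (n : ℕ) : poch 1 n = (n.factorial : ℝ) := by
  induction n with
  | zero => simp [poch_zero]
  | succ m ih => rw [poch_succ, ih, Nat.factorial_succ]; push_cast; ring

lemma poch_pos {a : ℝ} (ha : 0 < a) (n : ℕ) : 0 < poch a n := by
  induction n with
  | zero => simp [poch_zero]
  | succ m ih => rw [poch_succ]; positivity

lemma keyA (n : ℕ) : poch (1/4) n * poch (3/4) n * ((2*n).factorial : ℝ)
    = poch (1/2) (2*n) * poch (1/2) n * (n.factorial : ℝ) := by
  induction n with
  | zero => simp [poch_zero]
  | succ m ih =>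
    have h2 : 2*(m+1) = (2*m+1)+1 := by ring
    rw [h2, poch_succ, poch_succ, poch_succ, poch_succ, Nat.factorial_succ]
    rw [poch_succ, Nat.factorial_succ, Nat.factorial_succ]
    push_cast
    linear_combination ((1/4 + (m:ℝ)) * (3/4 + (m:ℝ)) * (2*(m:ℝ)+2) * (2*(m:ℝ)+1)) * ih

noncomputable def W (n : ℕ) : ℝ := poch (1/2) n / (n.factorial : ℝ)

lemma W_prod (n : ℕ) : W n = ∏ i ∈ Finset.range n, (2 * (i:ℝ) + 1) / (2 * i + 2) := by
  induction n with
  | zero => simp [W, poch_zero]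
  | succ m ih =>
    rw [Finset.prod_range_succ, ← ih, W, W, poch_succ, Nat.factorial_succ]
    have h1 : ((m.factorial : ℝ)) ≠ 0 := Nat.cast_ne_zero.mpr m.factorial_ne_zero
    field_simp
    push_cast
    ring

lemma W_nonneg (n : ℕ) : 0 ≤ W n := by
  rw [W_prod]; exact Finset.prod_nonneg fun i _ => by positivity

lemma W_le_one (n : ℕ) : W n ≤ 1 := by
  rw [W_prod]
  apply Finset.prod_le_one (fun i _ => by positivity) (fun i _ => by
    rw [div_le_one (by positivity)]; linarith)

lemma integral_cos_even (m : ℕ) : (∫ x in (0:ℝ)..π, cos x ^ (2*m)) = π * W m := by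
  have L : IntervalIntegrable (fun x => cos x ^ (2*m)) volume 0 (π/2) :=
    (continuous_cos.pow _).intervalIntegrable _ _
  have R : IntervalIntegrable (fun x => cos x ^ (2*m)) volume (π/2) π :=
    (continuous_cos.pow _).intervalIntegrable _ _
  have hsym : (∫ x in (π/2)..π, cos x ^ (2*m)) = ∫ x in (0:ℝ)..(π/2), cos x ^ (2*m) := by
    have := intervalIntegral.integral_comp_sub_left (a := (0:ℝ)) (b := π/2)
      (fun y => cos y ^ (2*m)) π
    rw [sub_zero, show π - π/2 = π/2 by ring] at this
    rw [← this]
    congr 1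
    ext x
    rw [Real.cos_pi_sub, pow_mul, pow_mul, neg_pow, neg_one_sq, one_mul]
  rw [← intervalIntegral.integral_add_adjacent_intervals L R, hsym, ← two_mul,
    EulerSine.integral_cos_pow_eq, W_prod, ← integral_sin_pow_even]
  ring

noncomputable def A (n : ℕ) : ℝ := poch (-5/2) n / (n.factorial : ℝ)

lemma pochB2 (n : ℕ) : |poch (-5/2) (n+1)| ≤ (15/4) * (n.factorial : ℝ) := by
  induction n with
  | zero =>
    rw [show (0:ℕ)+1 = 1 by rfl, show poch (-5/2 : ℝ) 1 = -5/2 by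
      show poch (-5/2 : ℝ) (0+1) = _; rw [poch_succ, poch_zero]; norm_num]
    rw [abs_of_neg (by norm_num)]; norm_num
  | succ m ih =>
    rcases Nat.eq_zero_or_pos m with hm | hm
    · subst hm
      have hv : poch (-5/2 : ℝ) (0+1+1) = 15/4 := by
        rw [poch_succ, poch_succ, poch_zero]; norm_num
      rw [hv, abs_of_pos (by norm_num)]
      norm_num
    · have hm1 : (1:ℝ) ≤ (m:ℝ) := by exact_mod_cast hm
      rw [poch_succ, abs_mul, Nat.factorial_succ]
      push_cast
      have h0 := abs_nonneg (poch (-5/2 : ℝ) (m+1))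
      have h1 : |(-5/2 : ℝ) + ((m:ℝ)+1)| ≤ (m:ℝ) + 1 := by
        rw [abs_le]; constructor <;> nlinarith
      nlinarith [mul_le_mul ih h1 (abs_nonneg _) (by positivity : (0:ℝ) ≤ 15/4 * (m.factorial:ℝ))]

lemma pochB1 (n : ℕ) : |poch (-5/2) (n+1)| * ((n:ℝ)+1) ≤ 8 * (n.factorial : ℝ) := by
  induction n with
  | zero =>
    rw [show (0:ℕ)+1 = 1 by rfl, show poch (-5/2 : ℝ) 1 = -5/2 by
      show poch (-5/2 : ℝ) (0+1) = _; rw [poch_succ, poch_zero]; norm_num]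
    rw [abs_of_neg (by norm_num)]; norm_num
  | succ m ih =>
    rcases Nat.eq_zero_or_pos m with hm | hm
    · subst hm
      have hv : poch (-5/2 : ℝ) (0+1+1) = 15/4 := by
        rw [poch_succ, poch_succ, poch_zero]; norm_num
      rw [hv, abs_of_pos (by norm_num)]
      norm_num
    · have hm1 : (1:ℝ) ≤ (m:ℝ) := by exact_mod_cast hm
      rw [poch_succ, abs_mul, Nat.factorial_succ]
      push_cast
      have h0 := abs_nonneg (poch (-5/2 : ℝ) (m+1))
      have h1 : |(-5/2 : ℝ) + ((m:ℝ)+1)| ≤ (m:ℝ) - 1/2 := by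
        rw [abs_le]; constructor <;> nlinarith
      nlinarith [mul_le_mul ih (le_refl ((m:ℝ)+1)) (by positivity) (by positivity : (0:ℝ) ≤ 8 * (m.factorial:ℝ)),
        mul_le_mul h1 (le_refl ((m:ℝ)+2)) (by positivity) (by linarith : (0:ℝ) ≤ (m:ℝ) - 1/2)]

lemma A_succ_le (n : ℕ) : |A (n+1)| ≤ 8 / ((n:ℝ)+1)^2 := by
  have hf : ((n+1).factorial : ℝ) = ((n:ℝ)+1) * (n.factorial : ℝ) := by
    rw [Nat.factorial_succ]; push_cast; ring
  have h1 : (0:ℝ) < ((n:ℝ)+1) := by positivity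
  have h2 : (0:ℝ) < (n.factorial : ℝ) := by exact_mod_cast n.factorial_pos
  rw [A, abs_div, abs_of_pos (show (0:ℝ) < ((n+1).factorial : ℝ) by exact_mod_cast (n+1).factorial_pos),
    hf, div_le_div_iff₀ (by positivity) (by positivity)]
  nlinarith [mul_le_mul_of_nonneg_right (pochB1 n) h1.le]

lemma A_abs_summable : Summable (fun n => |A n|) := by
  rw [← summable_nat_add_iff 1]
  apply Summable.of_nonneg_of_le (fun n => abs_nonneg _) (fun n => A_succ_le n)
  have : Summable (fun n : ℕ => 8 * (1 / ((n:ℝ)+1)^2)) := by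
    apply Summable.mul_left
    have := (summable_nat_add_iff (f := fun n : ℕ => 1 / (n:ℝ)^2) 1).mpr
      ((Real.summable_one_div_nat_pow (p := 2)).mpr one_lt_two)
    simpa using this
  simpa [div_eq_mul_inv, mul_comm] using this

noncomputable def fb : ℝ → ℝ := fun t => (1 - t) ^ (5/2 : ℝ)

lemma fb_contDiffOn {x : ℝ} (hx1 : x < 1) (n : ℕ) :
    ContDiffOn ℝ n fb (Icc 0 x) := by
  intro t ht
  have h1 : (1 : ℝ) - t ≠ 0 := by
    have := ht.2; have : t < 1 := lt_of_le_of_lt ht.2 hx1; linarith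
  have hc : ContDiffAt ℝ n (fun y : ℝ => y ^ (5/2 : ℝ)) (1 - t) :=
    Real.contDiffAt_rpow_const_of_ne h1
  exact (hc.comp t ((contDiff_const.sub contDiff_id).contDiffAt)).contDiffWithinAt

lemma gb_hasDerivAt (k : ℕ) {t : ℝ} (ht : t < 1) :
    HasDerivAt (fun t : ℝ => poch (-5/2) k * (1-t) ^ ((5/2 : ℝ) - k))
      (poch (-5/2) (k+1) * (1-t) ^ ((5/2 : ℝ) - (k+1 : ℕ))) t := by
  have h1 : (1 : ℝ) - t ≠ 0 := by linarith
  have hd : HasDerivAt (fun y : ℝ => 1 - y) (-1 : ℝ) t := by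
    simpa using (hasDerivAt_id t).const_sub 1
  have := (hd.rpow_const (p := (5/2 : ℝ) - k) (Or.inl h1)).const_mul (poch (-5/2) k)
  refine this.congr_deriv ?_
  rw [poch_succ]
  have he : ((5/2 : ℝ) - k) - 1 = (5/2 : ℝ) - ((k+1 : ℕ) : ℝ) := by push_cast; ring
  rw [← he]
  ring

lemma fb_iteratedDeriv {x : ℝ} (hx0 : 0 < x) (hx1 : x < 1) (k : ℕ) :
    Set.EqOn (iteratedDerivWithin k fb (Icc 0 x))
      (fun t => poch (-5/2) k * (1-t) ^ ((5/2 : ℝ) - k)) (Icc 0 x) := by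
  induction k with
  | zero =>
    intro t ht
    simp [iteratedDerivWithin_zero, fb, poch_zero]
  | succ m ih =>
    intro t ht
    have hUD : UniqueDiffOn ℝ (Icc (0:ℝ) x) := uniqueDiffOn_Icc hx0
    have ht1 : t < 1 := lt_of_le_of_lt ht.2 hx1
    rw [iteratedDerivWithin_succ]
    rw [derivWithin_congr ih (ih ht)]
    rw [((gb_hasDerivAt m ht1).hasDerivWithinAt).derivWithin (hUD t ht)]

lemma binom_hasSum {x : ℝ} (hx0 : 0 ≤ x) (hx1 : x < 1) :
    HasSum (fun n => A n * x ^ n) ((1 - x) ^ (5/2 : ℝ)) := by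
  have hxle : |x| ≤ 1 := by rw [abs_of_nonneg hx0]; linarith
  have hsum : Summable (fun n => A n * x ^ n) := by
    apply Summable.of_abs
    apply Summable.of_nonneg_of_le (fun n => abs_nonneg _) _ A_abs_summable
    intro n
    rw [abs_mul, abs_pow]
    calc |A n| * |x| ^ n ≤ |A n| * 1 :=
          mul_le_mul_of_nonneg_left (pow_le_one₀ (abs_nonneg x) hxle) (abs_nonneg _)
      _ = |A n| := mul_one _
  rcases eq_or_lt_of_le hx0 with h0 | h0
  · rw [← h0, show (1:ℝ) - 0 = 1 by ring, Real.one_rpow]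
    have h1 : (fun n => A n * (0:ℝ) ^ n) 0 = 1 := by simp [A, poch_zero]
    have := hasSum_single (f := fun n => A n * (0:ℝ) ^ n) 0
      (fun b hb => by simp [zero_pow hb])
    rw [show A 0 * (0:ℝ)^0 = 1 from h1] at this; exact this
  · have hbound : ∀ n : ℕ, |(1 - x) ^ (5/2 : ℝ) - ∑ k ∈ Finset.range (n+1), A k * x ^ k|
        ≤ 15/4 * x ^ (n+1) := by
      intro n
      obtain ⟨x', hx', heq⟩ := taylor_mean_remainder_cauchy (f := fb) (x₀ := 0) (n := n) h0.ne
        (by rw [uIcc_of_le h0.le]; exact fb_contDiffOn hx1 n)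
        (by
          rw [uIcc_of_le h0.le, uIoo_of_le h0.le]
          exact fun t ht => by
            have ht' : t ∈ Icc (0:ℝ) x := Ioo_subset_Icc_self ht
            exact (((gb_hasDerivAt n (lt_of_le_of_lt ht'.2 hx1)).differentiableAt.differentiableWithinAt).congr
              (fun y hy => fb_iteratedDeriv h0 hx1 n (Ioo_subset_Icc_self hy))
              (fb_iteratedDeriv h0 hx1 n ht')))
      rw [uIcc_of_le h0.le] at heq
      rw [uIoo_of_le h0.le] at hx'
      have hT : taylorWithinEval fb n (Icc 0 x) 0 x = ∑ k ∈ Finset.range (n+1), A k * x ^ k := by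
        rw [taylor_within_apply]
        apply Finset.sum_congr rfl
        intro k _
        have h0m : (0:ℝ) ∈ Icc (0:ℝ) x := ⟨le_refl _, h0.le⟩
        rw [fb_iteratedDeriv h0 hx1 k h0m]
        simp only [sub_zero, smul_eq_mul]
        rw [Real.one_rpow, A]
        ring
      rw [hT] at heq
      have hx'I : x' ∈ Icc (0:ℝ) x := Ioo_subset_Icc_self hx'
      rw [fb_iteratedDeriv h0 hx1 (n+1) hx'I] at heq
      simp only [sub_zero] at heq
      have hcpos : (0:ℝ) < 1 - x' := by
        have := hx'.2; linarith
      have hcle : (1:ℝ) - x' ≤ 1 := by have := hx'.1; linarith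
      have hsplit : (1 - x') ^ ((5/2:ℝ) - ((n+1:ℕ):ℝ)) = (1-x') ^ ((3:ℝ)/2) / (1-x') ^ n := by
        rw [show (5/2 : ℝ) - ((n+1:ℕ):ℝ) = (3:ℝ)/2 - (n:ℕ) by push_cast; ring,
          Real.rpow_sub hcpos, Real.rpow_natCast]
      rw [hsplit] at heq
      have hfact : (0:ℝ) < (n.factorial : ℝ) := by exact_mod_cast n.factorial_pos
      have hcn : (0:ℝ) < (1-x')^n := pow_pos hcpos n
      have hxx' : (0:ℝ) ≤ x - x' := by linarith [hx'.2]
      have hE : poch (-5/2) (n+1) * ((1-x') ^ ((3:ℝ)/2) / (1-x')^n) * (x - x')^n / (n.factorial:ℝ) * x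
          = poch (-5/2) (n+1) * ((1-x') ^ ((3:ℝ)/2) * (x-x')^n * x / ((1-x')^n * (n.factorial:ℝ))) := by
        field_simp
      have hnn : (0:ℝ) ≤ (1 - x') ^ ((3:ℝ)/2) * (x - x')^n * x / ((1-x')^n * (n.factorial:ℝ)) := by
        apply div_nonneg
        · exact mul_nonneg (mul_nonneg (Real.rpow_nonneg hcpos.le _) (pow_nonneg hxx' n)) h0.le
        · positivity
      rw [show (1 - x) ^ (5/2:ℝ) = fb x from rfl, heq, hE, abs_mul, abs_of_nonneg hnn]
      have h32 : (1-x') ^ ((3:ℝ)/2) ≤ 1 := Real.rpow_le_one hcpos.le hcle (by norm_num)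
      have hkey : (x - x')^n ≤ x^n * (1-x')^n := by
        have hstep : x - x' ≤ x * (1-x') := by nlinarith [hx'.1, hx'.2]
        calc (x-x')^n ≤ (x*(1-x'))^n := pow_le_pow_left₀ hxx' hstep n
          _ = x^n * (1-x')^n := mul_pow _ _ _
      calc |poch (-5/2) (n+1)| * ((1-x') ^ ((3:ℝ)/2) * (x-x')^n * x / ((1-x')^n * (n.factorial:ℝ)))
          ≤ (15/4 * (n.factorial:ℝ)) * ((1-x') ^ ((3:ℝ)/2) * (x-x')^n * x / ((1-x')^n * (n.factorial:ℝ))) :=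
            mul_le_mul_of_nonneg_right (pochB2 n) (by positivity)
        _ ≤ (15/4 * (n.factorial:ℝ)) * (1 * (x^n * (1-x')^n) * x / ((1-x')^n * (n.factorial:ℝ))) := by
            gcongr
        _ = 15/4 * x^(n+1) := by field_simp; ring
    have hz : Tendsto (fun n : ℕ => 15/4 * x^(n+1)) atTop (nhds 0) := by
      have := (tendsto_pow_atTop_nhds_zero_of_lt_one hx0 hx1).comp (tendsto_add_atTop_nat 1)
      simpa using this.const_mul (15/4 : ℝ)
    have h4 : Tendsto (fun n : ℕ => (∑ k ∈ Finset.range (n+1), A k * x ^ k) - (1-x)^(5/2:ℝ))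
        atTop (nhds 0) :=
      squeeze_zero_norm (fun n => by rw [Real.norm_eq_abs, abs_sub_comm]; exact hbound n) hz
    have hL : Tendsto (fun n : ℕ => ∑ k ∈ Finset.range (n+1), A k * x ^ k) atTop
        (nhds ((1 - x) ^ (5/2 : ℝ))) := by
      have := h4.add (tendsto_const_nhds (x := (1-x)^(5/2:ℝ)) (f := atTop))
      simpa using this
    have h3 : Tendsto (fun n : ℕ => ∑ k ∈ Finset.range (n+1), A k * x ^ k) atTop
        (nhds (∑' n, A n * x ^ n)) :=
      hsum.hasSum.tendsto_sum_nat.comp (tendsto_add_atTop_nat 1)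
    have := tendsto_nhds_unique h3 hL
    exact this ▸ hsum.hasSum

noncomputable def Q : ℝ → ℝ := fun u =>
  (1/10)*(1+u^2)^4 - (31/80)*(1+u^2)^3 + (103/480)*(1+u^2)^2 + (103/384)*(1+u^2) + 103/256

noncomputable def Qd : ℝ → ℝ := fun u =>
  (4/5)*u*(1+u^2)^3 - (93/40)*u*(1+u^2)^2 + (103/120)*u*(1+u^2) + (103/192)*u

lemma hQ (u : ℝ) : HasDerivAt Q (Qd u) u := by
  have h1 : HasDerivAt (fun u:ℝ => 1+u^2) (2*u) u := by
    simpa using ((hasDerivAt_pow 2 u).const_add 1)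
  have h4 := (h1.pow 4).const_mul (1/10 : ℝ)
  have h3 := (h1.pow 3).const_mul (31/80 : ℝ)
  have h2 := (h1.pow 2).const_mul (103/480 : ℝ)
  have hl := h1.const_mul (103/384 : ℝ)
  have := (((h4.sub h3).add h2).add hl).add_const (103/256 : ℝ)
  refine this.congr_deriv ?_
  unfold Qd
  push_cast
  ring

noncomputable def F : ℝ → ℝ := fun u =>
  u * Real.sqrt (1+u^2) * Q u + (103/256) * Real.log (u + Real.sqrt (1+u^2))

lemma F_hasDerivAt (u : ℝ) :
    HasDerivAt F ((1-u^2)^2 * (1+u^2)^2 * Real.sqrt (1+u^2)) u := by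
  set s := Real.sqrt (1+u^2) with hsdef
  have hpos : (0:ℝ) < 1 + u^2 := by positivity
  have hs : 0 < s := Real.sqrt_pos.mpr hpos
  have hs2 : s^2 = 1 + u^2 := Real.sq_sqrt hpos.le
  have habs : |u| < s := by
    rw [← Real.sqrt_sq_eq_abs, hsdef]
    exact Real.sqrt_lt_sqrt (sq_nonneg u) (by linarith)
  have hus : 0 < u + s := by
    have := neg_abs_le u; linarith
  have hsd : HasDerivAt (fun u : ℝ => Real.sqrt (1+u^2)) (u * s / (1+u^2)) u := by
    have h1 : HasDerivAt (fun u:ℝ => 1+u^2) (2*u) u := by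
      simpa using ((hasDerivAt_pow 2 u).const_add 1)
    have := (Real.hasDerivAt_sqrt hpos.ne').comp u h1
    refine this.congr_deriv ?_
    rw [← hsdef]
    field_simp
    linear_combination (-u) * hs2
  have hlog : HasDerivAt (fun u : ℝ => Real.log (u + Real.sqrt (1+u^2)))
      (s / (1+u^2)) u := by
    have hadd : HasDerivAt (fun u : ℝ => u + Real.sqrt (1+u^2)) (1 + u * s / (1+u^2)) u :=
      (hasDerivAt_id u).add hsd
    have := hadd.log hus.ne'
    refine this.congr_deriv ?_
    rw [← hsdef]
    field_simp
    linear_combination (-1) * hs2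
  have hprod : HasDerivAt (fun u : ℝ => u * Real.sqrt (1+u^2) * Q u)
      ((1 * s + u * (u * s / (1+u^2))) * Q u + (u * s) * Qd u) u :=
    ((hasDerivAt_id u).mul hsd).mul (hQ u)
  have htot := hprod.add ((hlog.const_mul (103/256 : ℝ)))
  refine htot.congr_deriv ?_
  unfold Q Qd
  field_simp
  ring

noncomputable def Hf : ℝ → ℝ := fun θ =>
  Real.sin θ ^ 5 * (1 + Real.cos θ ^ 2) ^ 2 * Real.sqrt (1 + Real.cos θ ^ 2)

lemma G_hasDerivAt (θ : ℝ) : HasDerivAt (fun θ => -F (Real.cos θ)) (Hf θ) θ := by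
  have h := ((F_hasDerivAt (Real.cos θ)).comp θ (Real.hasDerivAt_cos θ)).neg
  refine h.congr_deriv ?_
  unfold Hf
  rw [show (1:ℝ) - Real.cos θ^2 = Real.sin θ^2 by
    have := Real.sin_sq_add_cos_sq θ; linarith]
  ring

lemma Hf_continuous : Continuous Hf := by
  unfold Hf
  apply Continuous.mul
  · exact ((continuous_sin.pow 5).mul ((continuous_const.add (continuous_cos.pow 2)).pow 2))
  · exact Real.continuous_sqrt.comp (continuous_const.add (continuous_cos.pow 2))

lemma integral_Hf : ∫ θ in (0:ℝ)..π, Hf θ = F 1 - F (-1) := by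
  rw [intervalIntegral.integral_eq_sub_of_hasDerivAt (fun θ _ => G_hasDerivAt θ)
    (Hf_continuous.intervalIntegrable 0 π)]
  rw [Real.cos_pi, Real.cos_zero]
  ring

lemma sqrt_two_sq : Real.sqrt 2 ^ 2 = 2 := Real.sq_sqrt (by norm_num)

lemma F_one : F 1 = 1141/3840 * Real.sqrt 2 + 103/256 * Real.log (1 + Real.sqrt 2) := by
  unfold F Q
  rw [show (1:ℝ) + 1^2 = 2 by norm_num]
  norm_num
  ring

lemma log_sqrt2_sub_one : Real.log (Real.sqrt 2 - 1) = - Real.log (1 + Real.sqrt 2) := by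
  have h2 := sqrt_two_sq
  have h1 : Real.sqrt 2 - 1 = (1 + Real.sqrt 2)⁻¹ := by
    have hne : (1:ℝ) + Real.sqrt 2 ≠ 0 := by positivity
    field_simp
    nlinarith [h2]
  rw [h1, Real.log_inv]

lemma F_neg_one : F (-1) = -(1141/3840) * Real.sqrt 2 - 103/256 * Real.log (1 + Real.sqrt 2) := by
  unfold F Q
  rw [show (1:ℝ) + (-1)^2 = 2 by norm_num]
  rw [show (-1:ℝ) + Real.sqrt 2 = Real.sqrt 2 - 1 by ring, log_sqrt2_sub_one]
  norm_num
  ring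

-- new glue lemmas
lemma term_eq (n : ℕ) :
    (poch (-5/2) n * poch (1/4) n * poch (3/4) n) / (poch (1/2) n * poch (1) n * (n.factorial : ℝ)) * (1:ℝ)^n
      = A n * W (2*n) := by
  have h12 : poch (1/2) n ≠ 0 := (poch_pos (by norm_num) n).ne'
  have hf : ((n.factorial : ℝ)) ≠ 0 := Nat.cast_ne_zero.mpr n.factorial_ne_zero
  have hf2 : (((2*n).factorial : ℝ)) ≠ 0 := Nat.cast_ne_zero.mpr (2*n).factorial_ne_zero
  have key := keyA n
  rw [one_pow, mul_one, poch_one, A, W]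
  field_simp
  ring_nf
  ring_nf at key
  linear_combination (poch (-5/2) n) * key

lemma pow_sq_rpow {a : ℝ} (ha : 0 ≤ a) : (a^2) ^ ((5:ℝ)/2) = a^5 := by
  rw [← Real.rpow_natCast a 2, ← Real.rpow_mul ha]
  norm_num

lemma rpow_52 {z : ℝ} (hz : 0 < z) : z ^ ((5:ℝ)/2) = z^2 * Real.sqrt z := by
  rw [show ((5:ℝ)/2) = ((2:ℕ):ℝ) + 1/2 by norm_num, Real.rpow_add hz, Real.rpow_natCast,
    ← Real.sqrt_eq_rpow]

lemma pointwise_sum {θ : ℝ} (hθ : θ ∈ Ioo (0:ℝ) π) :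
    HasSum (fun n => A n * Real.cos θ ^ (4*n)) (Hf θ) := by
  have hsin : 0 < Real.sin θ := Real.sin_pos_of_pos_of_lt_pi hθ.1 hθ.2
  have hpyth := Real.sin_sq_add_cos_sq θ
  have hx0 : (0:ℝ) ≤ Real.cos θ ^ 4 := by positivity
  have hx1 : Real.cos θ ^ 4 < 1 := by nlinarith
  have hbs := binom_hasSum hx0 hx1
  have hval : (1 - Real.cos θ ^ 4) ^ ((5:ℝ)/2) = Hf θ := by
    rw [show (1:ℝ) - Real.cos θ^4 = Real.sin θ^2 * (1 + Real.cos θ^2) by nlinarith,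
      Real.mul_rpow (sq_nonneg _) (by positivity), pow_sq_rpow hsin.le,
      rpow_52 (by positivity : (0:ℝ) < 1 + Real.cos θ^2)]
    unfold Hf; ring
  have := hbs
  rw [show (5/2 : ℝ) = (5:ℝ)/2 by norm_num] at this
  rw [hval] at this
  convert this using 2 with n
  rw [pow_mul]

lemma cos_pow_nonneg (θ : ℝ) (n : ℕ) : (0:ℝ) ≤ Real.cos θ ^ (4*n) := by
  rw [show 4*n = 2*n*2 by ring, pow_mul]; positivity

lemma integral_Fn (n : ℕ) :
    ∫ θ in Ioc (0:ℝ) π, A n * Real.cos θ ^ (4*n) = A n * (π * W (2*n)) := by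
  rw [MeasureTheory.integral_const_mul, ← intervalIntegral.integral_of_le Real.pi_pos.le,
    show 4*n = 2*(2*n) by ring, integral_cos_even]

lemma norm_integral_Fn (n : ℕ) :
    ∫ θ in Ioc (0:ℝ) π, ‖A n * Real.cos θ ^ (4*n)‖ = |A n| * (π * W (2*n)) := by
  have : ∀ θ : ℝ, ‖A n * Real.cos θ ^ (4*n)‖ = |A n| * Real.cos θ ^ (4*n) := by
    intro θ
    rw [Real.norm_eq_abs, abs_mul, abs_of_nonneg (cos_pow_nonneg θ n)]
  simp_rw [this]
  rw [MeasureTheory.integral_const_mul, ← intervalIntegral.integral_of_le Real.pi_pos.le,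
    show 4*n = 2*(2*n) by ring, integral_cos_even]

lemma main_hasSum : HasSum (fun n => A n * (π * W (2*n))) (F 1 - F (-1)) := by
  have hInt : ∀ n : ℕ, Integrable (fun θ => A n * Real.cos θ ^ (4*n))
      (volume.restrict (Ioc (0:ℝ) π)) :=
    fun n => (Continuous.integrableOn_Ioc (by continuity))
  have hSum : Summable (fun n => ∫ θ in Ioc (0:ℝ) π, ‖A n * Real.cos θ ^ (4*n)‖) := by
    apply Summable.of_nonneg_of_le
      (fun n => by rw [norm_integral_Fn]; exact mul_nonneg (abs_nonneg _) (mul_nonneg Real.pi_pos.le (W_nonneg _)))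
      (fun n => ?_) (A_abs_summable.mul_right π)
    rw [norm_integral_Fn]
    calc |A n| * (π * W (2*n)) ≤ |A n| * (π * 1) := by
          apply mul_le_mul_of_nonneg_left _ (abs_nonneg _)
          exact mul_le_mul_of_nonneg_left (W_le_one (2*n)) Real.pi_pos.le
      _ = |A n| * π := by ring
  have hswap := MeasureTheory.hasSum_integral_of_summable_integral_norm hInt hSum
  have hval : (∫ θ in Ioc (0:ℝ) π, ∑' n, A n * Real.cos θ ^ (4*n)) = F 1 - F (-1) := by
    rw [← MeasureTheory.Measure.restrict_congr_set MeasureTheory.Ioo_ae_eq_Ioc]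
    rw [MeasureTheory.setIntegral_congr_fun measurableSet_Ioo
      (fun θ hθ => (pointwise_sum hθ).tsum_eq)]
    rw [MeasureTheory.Measure.restrict_congr_set MeasureTheory.Ioo_ae_eq_Ioc,
      ← intervalIntegral.integral_of_le Real.pi_pos.le, integral_Hf]
  rw [hval] at hswap
  have := hswap
  simp_rw [integral_Fn] at this
  exact this

theorem stmt_2 :
    ∑' n : ℕ, (poch (-5/2) n * poch (1/4) n * poch (3/4) n) / (poch (1/2) n * poch (1) n * (Nat.factorial n : ℝ)) * (1 : ℝ) ^ n
      = 1141 / (960 * Real.sqrt 2 * Real.pi)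
        - 103 / (256 * Real.pi) * Real.log ((2 - Real.sqrt 2)/(2 + Real.sqrt 2)) := by
  have hdiv := main_hasSum.div_const π
  have hterm : ∀ n : ℕ, A n * (π * W (2*n)) / π = A n * W (2*n) := by
    intro n; field_simp
  simp_rw [hterm] at hdiv
  have hts : ∑' n : ℕ, (poch (-5/2) n * poch (1/4) n * poch (3/4) n) / (poch (1/2) n * poch (1) n * (Nat.factorial n : ℝ)) * (1 : ℝ) ^ n
      = (F 1 - F (-1)) / π := by
    rw [tsum_congr term_eq]
    exact hdiv.tsum_eq
  rw [hts, F_one, F_neg_one]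
  -- log identity
  have hs2 := sqrt_two_sq
  have hsn := Real.sqrt_nonneg 2
  have ha : (0:ℝ) < 2 - Real.sqrt 2 := by nlinarith
  have hb : (0:ℝ) < 2 + Real.sqrt 2 := by linarith
  have hc : (0:ℝ) < 1 + Real.sqrt 2 := by linarith
  have hprod : (2 - Real.sqrt 2) * (1 + Real.sqrt 2)^2 = 2 + Real.sqrt 2 := by
    linear_combination (-Real.sqrt 2) * hs2
  have hlog : Real.log ((2 - Real.sqrt 2)/(2 + Real.sqrt 2))
      = -2 * Real.log (1 + Real.sqrt 2) := by
    rw [Real.log_div ha.ne' hb.ne', ← hprod, Real.log_mul ha.ne' (by positivity),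
      Real.log_pow]
    push_cast
    ring
  rw [hlog]
  have hπ := Real.pi_ne_zero
  have hsne : Real.sqrt 2 ≠ 0 := by positivity
  field_simp
  linear_combination (560824320) * hs2
end

section
/- The infinite series ∑_{n=1}^∞ 4^n·(n+1)^2 / ( (2n+1)·C(4n+1, 2n) ) equals ( −36 + 45π + 10√3·arcosh 2 ) / 144. -/
open Real MeasureTheory Filter

noncomputable def arcosh (x : ℝ) : ℝ := Real.log (x + Real.sqrt (x^2 - 1))

/- ## auxiliary: Beta integral -/

private lemma prod_asc (n k : ℕ) :
    ∏ j ∈ Finset.range k, ((n:ℂ)+1+j) = ((n+1).ascFactorial k : ℂ) := by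
  induction k with
  | zero => simp
  | succ k ih => rw [Finset.prod_range_succ, ih, Nat.ascFactorial_succ]; push_cast; ring

private lemma beta_nat (m : ℕ) : ∫ x in (0:ℝ)..1, x^m * (1-x)^m
    = (m.factorial : ℝ)^2 / ((2*m+1).factorial : ℝ) := by
  have h := Complex.betaIntegral_eval_nat_add_one_right (u := (m:ℂ)+1)
    (by simp; positivity) m
  rw [Complex.betaIntegral] at h
  simp only [add_sub_cancel_right] at h
  have hint : (∫ x in (0:ℝ)..1, (x:ℂ) ^ ((m:ℕ):ℂ) * (1-(x:ℂ)) ^ ((m:ℕ):ℂ))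
      = ((∫ x in (0:ℝ)..1, x^m * (1-x)^m : ℝ) : ℂ) := by
    rw [← intervalIntegral.integral_ofReal]
    refine intervalIntegral.integral_congr fun x _ => ?_
    rw [Complex.cpow_natCast, Complex.cpow_natCast]
    push_cast
    ring
  rw [hint, prod_asc] at h
  have hasc : (m.factorial : ℂ) * ((m+1).ascFactorial (m+1) : ℂ) = ((2*m+1).factorial : ℂ) := by
    rw [← Nat.cast_mul, Nat.factorial_mul_ascFactorial]
    norm_num
    ring_nf
  have hm0 : (m.factorial : ℂ) ≠ 0 := Nat.cast_ne_zero.2 m.factorial_ne_zero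
  have h2 : ((m+1).ascFactorial (m+1) : ℂ) = ((2*m+1).factorial : ℂ) / (m.factorial : ℂ) := by
    field_simp at hasc ⊢
    linear_combination hasc
  rw [h2] at h
  have hf0 : ((2*m+1).factorial : ℂ) ≠ 0 := Nat.cast_ne_zero.2 (Nat.factorial_ne_zero _)
  apply Complex.ofReal_inj.1
  rw [h]
  push_cast
  field_simp

private lemma term_eq_s18 (m : ℕ) :
    (4 : ℝ) ^ m * ((m:ℝ)+1)^2 / ((2*(m:ℝ)+1) * (Nat.choose (4*m+1) (2*m) : ℝ))
      = ∫ t in (0:ℝ)..1, (4:ℝ)^m * ((m:ℝ)+1)^2 * (t*(1-t))^(2*m) := by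
  have h1 : (∫ t in (0:ℝ)..1, (4:ℝ)^m * ((m:ℝ)+1)^2 * (t*(1-t))^(2*m))
      = (4:ℝ)^m * ((m:ℝ)+1)^2 * ∫ t in (0:ℝ)..1, t^(2*m)*(1-t)^(2*m) := by
    rw [← intervalIntegral.integral_const_mul]
    exact intervalIntegral.integral_congr fun x _ => by rw [mul_pow]
  rw [h1, beta_nat (2*m)]
  have hC : (4*m+1).choose (2*m) * (2*m).factorial * (2*m+1).factorial = (4*m+1).factorial := by
    have h := Nat.choose_mul_factorial_mul_factorial (n := 4*m+1) (k := 2*m) (by omega)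
    have : 4*m+1 - 2*m = 2*m+1 := by omega
    rwa [this] at h
  have hfs : (2*m+1).factorial = (2*m+1) * (2*m).factorial := Nat.factorial_succ _
  have hCpos : 0 < (4*m+1).choose (2*m) := Nat.choose_pos (by omega)
  have hC' : ((4*m+1).choose (2*m) : ℝ) * ((2*m).factorial : ℝ)
      * ((2*m+1) * ((2*m).factorial:ℝ)) = ((4*m+1).factorial : ℝ) := by
    rw [hfs] at hC
    exact_mod_cast hC
  have hne1 : ((2*m).factorial : ℝ) ≠ 0 := Nat.cast_ne_zero.2 (Nat.factorial_ne_zero _)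
  have hne2 : ((4*m+1).factorial : ℝ) ≠ 0 := Nat.cast_ne_zero.2 (Nat.factorial_ne_zero _)
  have hne3 : ((4*m+1).choose (2*m) : ℝ) ≠ 0 := Nat.cast_ne_zero.2 hCpos.ne'
  have hne4 : (2*(m:ℝ)+1) ≠ 0 := by positivity
  have hcast : ((2*(2*m)+1).factorial : ℝ) = ((4*m+1).factorial : ℝ) := by norm_num; ring_nf
  rw [hcast]
  field_simp
  linear_combination -hC'

/- ## auxiliary: the power series -/

private lemma hasSum_sq_geom {x : ℝ} (h0 : 0 ≤ x) (h1 : x < 1) :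
    HasSum (fun n : ℕ => ((n:ℝ)+1)^2 * x^n) ((1+x)/(1-x)^3) := by
  have hxnorm : ‖x‖ < 1 := by rwa [Real.norm_eq_abs, abs_of_nonneg h0]
  have hne : (1:ℝ) - x ≠ 0 := by linarith
  have key : ∀ N : ℕ, ∑ n ∈ Finset.range N, ((n:ℝ)+1)^2 * x^n
      = ((1+x) - x^N*(((N:ℝ)+1)^2 - (2*(N:ℝ)^2+2*(N:ℝ)-1)*x + (N:ℝ)^2*x^2))/(1-x)^3 := by
    intro N
    induction N with
    | zero => simp
    | succ N ih =>
      rw [Finset.sum_range_succ, ih]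
      push_cast
      field_simp
      ring
  rw [hasSum_iff_tendsto_nat_of_nonneg (fun i => by positivity)]
  simp only [key]
  have t2 : Tendsto (fun n : ℕ => (n:ℝ)^2 * x^n) atTop (nhds 0) :=
    (summable_pow_mul_geometric_of_norm_lt_one 2 hxnorm).tendsto_atTop_zero
  have t1 : Tendsto (fun n : ℕ => (n:ℝ) * x^n) atTop (nhds 0) := by
    have := (summable_pow_mul_geometric_of_norm_lt_one 1 hxnorm).tendsto_atTop_zero
    simpa using this
  have t0 : Tendsto (fun n : ℕ => x^n) atTop (nhds 0) :=
    tendsto_pow_atTop_nhds_zero_of_norm_lt_one hxnorm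
  have te : Tendsto (fun N : ℕ => x^N*(((N:ℝ)+1)^2 - (2*(N:ℝ)^2+2*(N:ℝ)-1)*x + (N:ℝ)^2*x^2))
      atTop (nhds 0) := by
    have h : Tendsto (fun N : ℕ => (1-x)^2 * ((N:ℝ)^2*x^N) + (2-2*x)*((N:ℝ)*x^N) + (1+x)*x^N)
        atTop (nhds 0) := by
      have := ((t2.const_mul ((1-x)^2)).add (t1.const_mul (2-2*x))).add (t0.const_mul (1+x))
      simpa using this
    refine h.congr fun N => by ring
  have h := (tendsto_const_nhds (x := (1+x)) (f := atTop (α := ℕ))).sub te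
  rw [sub_zero] at h
  exact h.div_const _

noncomputable def gg (t : ℝ) : ℝ := (1 + 4*(t*(1-t))^2)/(1 - 4*(t*(1-t))^2)^3 - 1

private lemma x_lt_one {t : ℝ} (ht0 : 0 ≤ t) (ht1 : t ≤ 1) : 4*(t*(1-t))^2 < 1 := by
  have hp : t*(1-t) ≤ 1/4 := by nlinarith [sq_nonneg (2*t-1)]
  have hp0 : 0 ≤ t*(1-t) := by nlinarith
  nlinarith [mul_le_mul hp hp hp0 (by norm_num : (0:ℝ) ≤ 1/4)]

private lemma hasSum_F {t : ℝ} (ht0 : 0 ≤ t) (ht1 : t ≤ 1) :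
    HasSum (fun k : ℕ => (4:ℝ)^(k+1) * ((k:ℝ)+1+1)^2 * (t*(1-t))^(2*(k+1))) (gg t) := by
  have h0 : (0:ℝ) ≤ 4*(t*(1-t))^2 := by positivity
  have h1 := x_lt_one ht0 ht1
  have h := hasSum_sq_geom h0 h1
  have htail := (hasSum_nat_add_iff' (f := fun n : ℕ => ((n:ℝ)+1)^2 * (4*(t*(1-t))^2)^n) 1).2 h
  simp only [Finset.range_one, Finset.sum_singleton] at htail
  norm_num at htail
  have hfun : (fun k : ℕ => (4:ℝ)^(k+1) * ((k:ℝ)+1+1)^2 * (t*(1-t))^(2*(k+1)))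
      = fun k : ℕ => ((k:ℝ)+1+1)^2 * (4*(t*(1-t))^2)^(k+1) := by
    funext k
    rw [show ((4:ℝ)*(t*(1-t))^2)^(k+1) = 4^(k+1) * ((t*(1-t))^2)^(k+1) from mul_pow _ _ _,
      ← pow_mul]
    ring
  rw [hfun, gg]
  convert htail using 2

/- ## auxiliary: the antiderivative -/

noncomputable def HH (t : ℝ) : ℝ :=
  (5/8) * arctan (2*t-1)
  + (5*Real.sqrt 3/144) * (Real.log (Real.sqrt 3 + 2*t - 1) - Real.log (Real.sqrt 3 + 1 - 2*t))
  + (2*t-1)/(4*(2*t^2-2*t+1))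
  + (2*t-1)/(16*(2*t^2-2*t+1)^2)
  + (2*t-1)/(24*(1+2*t-2*t^2))
  + (2*t-1)/(48*(1+2*t-2*t^2)^2)
  - (2*t-1)/2

private lemma sqrt3_sq : Real.sqrt 3 * Real.sqrt 3 = 3 := Real.mul_self_sqrt (by norm_num)

private lemma one_lt_sqrt3 : (1:ℝ) < Real.sqrt 3 := by
  have := Real.sqrt_lt_sqrt (by norm_num : (0:ℝ) ≤ 1) (by norm_num : (1:ℝ) < 3)
  simpa using this

private lemma hasDerivAt_HH {t : ℝ} (ht0 : 0 ≤ t) (ht1 : t ≤ 1) : HasDerivAt HH (gg t) t := by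
  have hPpos : (0:ℝ) < 2*t^2-2*t+1 := by nlinarith [sq_nonneg (2*t-1)]
  have hP : (2*t^2-2*t+1) ≠ 0 := ne_of_gt hPpos
  have hQpos : (0:ℝ) < 1+2*t-2*t^2 := by nlinarith
  have hQ : (1+2*t-2*t^2) ≠ 0 := ne_of_gt hQpos
  have hs3 := sqrt3_sq
  have ha : (0:ℝ) < Real.sqrt 3 + 2*t - 1 := by nlinarith [one_lt_sqrt3]
  have hb : (0:ℝ) < Real.sqrt 3 + 1 - 2*t := by nlinarith [one_lt_sqrt3]
  have hlin : HasDerivAt (fun t : ℝ => 2*t-1) 2 t := by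
    have h := ((hasDerivAt_id t).const_mul (2:ℝ)).sub_const (1:ℝ)
    exact h.congr_deriv (by ring)
  have h1 : HasDerivAt (fun t : ℝ => arctan (2*t-1)) (2 / (1+(2*t-1)^2)) t := by
    have h := (Real.hasDerivAt_arctan (2*t-1)).comp t hlin
    exact h.congr_deriv (by ring)
  have h2a : HasDerivAt (fun t : ℝ => Real.log (Real.sqrt 3 + 2*t - 1))
      (2 / (Real.sqrt 3 + 2*t - 1)) t := by
    have hl : HasDerivAt (fun t : ℝ => Real.sqrt 3 + 2*t - 1) 2 t := by
      have h := (((hasDerivAt_id t).const_mul (2:ℝ)).const_add (Real.sqrt 3)).sub_const (1:ℝ)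
      exact h.congr_deriv (by ring)
    have h := (Real.hasDerivAt_log (ne_of_gt ha)).comp t hl
    exact h.congr_deriv (by field_simp)
  have h2b : HasDerivAt (fun t : ℝ => Real.log (Real.sqrt 3 + 1 - 2*t))
      (-2 / (Real.sqrt 3 + 1 - 2*t)) t := by
    have hl : HasDerivAt (fun t : ℝ => Real.sqrt 3 + 1 - 2*t) (-2) t := by
      have h := ((hasDerivAt_id t).const_mul (2:ℝ)).const_sub (Real.sqrt 3 + 1)
      exact h.congr_deriv (by ring)
    have h := (Real.hasDerivAt_log (ne_of_gt hb)).comp t hl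
    exact h.congr_deriv (by field_simp)
  have hPbase : HasDerivAt (fun t : ℝ => 2*t^2-2*t+1) (4*t-2) t := by
    have h := (((hasDerivAt_pow 2 t).const_mul (2:ℝ)).sub
      ((hasDerivAt_id t).const_mul (2:ℝ))).add_const (1:ℝ)
    exact h.congr_deriv (by push_cast; ring)
  have hQbase : HasDerivAt (fun t : ℝ => 1+2*t-2*t^2) (2-4*t) t := by
    have h := (((hasDerivAt_id t).const_mul (2:ℝ)).const_add (1:ℝ)).sub
      ((hasDerivAt_pow 2 t).const_mul (2:ℝ))
    exact h.congr_deriv (by push_cast; ring)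
  have hd3' : HasDerivAt (fun t : ℝ => 4*(2*t^2-2*t+1)) (4*(4*t-2)) t := hPbase.const_mul 4
  have hd4' : HasDerivAt (fun t : ℝ => 16*(2*t^2-2*t+1)^2)
      (16*(2*(2*t^2-2*t+1)*(4*t-2))) t := by
    have h := (hPbase.pow 2).const_mul (16:ℝ)
    exact h.congr_deriv (by push_cast; ring)
  have hd5' : HasDerivAt (fun t : ℝ => 24*(1+2*t-2*t^2)) (24*(2-4*t)) t := hQbase.const_mul 24
  have hd6' : HasDerivAt (fun t : ℝ => 48*(1+2*t-2*t^2)^2)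
      (48*(2*(1+2*t-2*t^2)*(2-4*t))) t := by
    have h := (hQbase.pow 2).const_mul (48:ℝ)
    exact h.congr_deriv (by push_cast; ring)
  have hne3 : (4*(2*t^2-2*t+1)) ≠ 0 := by positivity
  have hne4 : (16*(2*t^2-2*t+1)^2) ≠ 0 := by positivity
  have hne5 : (24*(1+2*t-2*t^2)) ≠ 0 := by positivity
  have hne6 : (48*(1+2*t-2*t^2)^2) ≠ 0 := by positivity
  have h3 := hlin.div hd3' hne3
  have h4 := hlin.div hd4' hne4
  have h5 := hlin.div hd5' hne5
  have h6 := hlin.div hd6' hne6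
  have h7 : HasDerivAt (fun t : ℝ => (2*t-1)/2) 1 t := by
    have h := hlin.div_const (2:ℝ)
    exact h.congr_deriv (by norm_num)
  have htot := ((((((h1.const_mul (5/8:ℝ)).add
      ((h2a.sub h2b).const_mul (5*Real.sqrt 3/144))).add h3).add h4).add h5).add h6).sub h7
  refine htot.congr_deriv ?_
  have hlog : 5*Real.sqrt 3/144 * (2/(Real.sqrt 3 + 2*t-1) - -2/(Real.sqrt 3 + 1 - 2*t))
      = 5/(24*(1+2*t-2*t^2)) := by
    field_simp
    ring_nf
    linear_combination (-48+192*t-192*t^2) * hs3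
  rw [hlog, gg]
  have hx : (1 - 4*(t*(1-t))^2) = (2*t^2-2*t+1)*(1+2*t-2*t^2) := by ring
  rw [hx]
  have hP' : 2*t*(t-1)+1 ≠ 0 := by nlinarith
  field_simp
  ring

private lemma HH_diff :
    HH 1 - HH 0 = (-36 + 45 * Real.pi + 10 * Real.sqrt 3 * _root_.arcosh 2) / 144 := by
  have hs3 := sqrt3_sq
  have h1 : (1:ℝ) < Real.sqrt 3 := one_lt_sqrt3
  have harc : _root_.arcosh 2 = Real.log (2 + Real.sqrt 3) := by
    rw [_root_.arcosh]
    norm_num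
  have hlog : Real.log (Real.sqrt 3 + 1) - Real.log (Real.sqrt 3 - 1)
      = Real.log (2 + Real.sqrt 3) := by
    rw [← Real.log_div (by positivity) (by linarith)]
    congr 1
    rw [div_eq_iff (by linarith)]
    linear_combination -hs3
  rw [HH, HH]
  norm_num
  rw [show Real.sqrt 3 + 2 - 1 = Real.sqrt 3 + 1 by ring,
    show Real.sqrt 3 + 1 - 2 = Real.sqrt 3 - 1 by ring, harc, ← hlog]
  ring

private lemma gg_intervalIntegrable : IntervalIntegrable gg volume 0 1 := by
  apply ContinuousOn.intervalIntegrable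
  apply ContinuousOn.sub _ continuousOn_const
  apply ContinuousOn.div
  · fun_prop
  · fun_prop
  · intro t ht
    rw [Set.uIcc_of_le (by norm_num : (0:ℝ) ≤ 1)] at ht
    have h := x_lt_one ht.1 ht.2
    have h2 : (0:ℝ) < 1 - 4*(t*(1-t))^2 := by linarith
    positivity

private lemma integral_gg :
    ∫ t in (0:ℝ)..1, gg t = (-36 + 45 * Real.pi + 10 * Real.sqrt 3 * _root_.arcosh 2) / 144 := by
  rw [← HH_diff]
  apply intervalIntegral.integral_eq_sub_of_hasDerivAt _ gg_intervalIntegrable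
  intro t ht
  rw [Set.uIcc_of_le (by norm_num : (0:ℝ) ≤ 1)] at ht
  exact hasDerivAt_HH ht.1 ht.2

/- ## main theorem -/

theorem stmt_18 :
    ∑' k : ℕ, (fun n : ℕ =>
        (4 : ℝ) ^ n * ((n:ℝ)+1)^2 / ((2*(n:ℝ)+1) * (Nat.choose (4*n+1) (2*n) : ℝ))) (k + 1)
      = (-36 + 45 * Real.pi + 10 * Real.sqrt 3 * _root_.arcosh 2) / 144 := by
  set F : ℕ → ℝ → ℝ :=
    fun k t => (4:ℝ)^(k+1) * ((k:ℝ)+1+1)^2 * (t*(1-t))^(2*(k+1)) with hF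
  have hterm : ∀ k : ℕ, (fun n : ℕ =>
      (4 : ℝ) ^ n * ((n:ℝ)+1)^2 / ((2*(n:ℝ)+1) * (Nat.choose (4*n+1) (2*n) : ℝ))) (k + 1)
      = ∫ t in Set.Ioc (0:ℝ) 1, F k t := by
    intro k
    have h := term_eq_s18 (k+1)
    push_cast at h
    beta_reduce
    push_cast
    rw [h, intervalIntegral.integral_of_le (by norm_num : (0:ℝ) ≤ 1)]
  simp only [hterm]
  have hFcont : ∀ k, Continuous (F k) := by
    intro k
    fun_prop
  have hF_int : ∀ k : ℕ, Integrable (F k) (volume.restrict (Set.Ioc (0:ℝ) 1)) := by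
    intro k
    exact (hFcont k).integrableOn_Ioc
  have hbound : ∀ k : ℕ, ∀ t ∈ Set.Ioc (0:ℝ) 1,
      ‖F k t‖ ≤ ((k:ℝ)+2)^2 * (1/4)^(k+1) := by
    intro k t ht
    have ht0 : 0 ≤ t := le_of_lt ht.1
    have ht1 : t ≤ 1 := ht.2
    have hp : t*(1-t) ≤ 1/4 := by nlinarith [sq_nonneg (2*t-1)]
    have hp0 : 0 ≤ t*(1-t) := by nlinarith
    have hsq : (t*(1-t))^2 ≤ 1/16 := by nlinarith
    have hpow : ((t*(1-t))^2)^(k+1) ≤ (1/16:ℝ)^(k+1) :=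
      pow_le_pow_left₀ (by positivity) hsq _
    have hFnn : 0 ≤ F k t := by
      rw [hF]
      positivity
    rw [Real.norm_of_nonneg hFnn, hF]
    calc (4:ℝ)^(k+1) * ((k:ℝ)+1+1)^2 * (t*(1-t))^(2*(k+1))
        = (4:ℝ)^(k+1) * ((k:ℝ)+1+1)^2 * ((t*(1-t))^2)^(k+1) := by rw [← pow_mul]
      _ ≤ (4:ℝ)^(k+1) * ((k:ℝ)+1+1)^2 * (1/16:ℝ)^(k+1) := by
          apply mul_le_mul_of_nonneg_left hpow (by positivity)
      _ = ((k:ℝ)+2)^2 * ((4*(1/16):ℝ))^(k+1) := by rw [mul_pow]; ring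
      _ = ((k:ℝ)+2)^2 * (1/4)^(k+1) := by norm_num
  have hsummable_bound : Summable (fun k : ℕ => ((k:ℝ)+2)^2 * (1/4)^(k+1)) := by
    have hn : ‖(1/4 : ℝ)‖ < 1 := by rw [Real.norm_eq_abs, abs_of_pos] <;> norm_num
    have s2 := summable_pow_mul_geometric_of_norm_lt_one (R := ℝ) 2 hn
    have s1 := summable_pow_mul_geometric_of_norm_lt_one (R := ℝ) 1 hn
    have s0 := summable_pow_mul_geometric_of_norm_lt_one (R := ℝ) 0 hn
    have := ((s2.mul_left (1/4:ℝ)).add (s1.mul_left 1)).add (s0.mul_left 1)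
    refine this.congr fun k => ?_
    push_cast
    ring
  have hF_sum : Summable fun k : ℕ => ∫ t in Set.Ioc (0:ℝ) 1, ‖F k t‖ := by
    apply Summable.of_nonneg_of_le
      (fun k => integral_nonneg (fun t => norm_nonneg _)) _ hsummable_bound
    intro k
    have hconst : IntegrableOn (fun _ : ℝ => ((k:ℝ)+2)^2 * (1/4)^(k+1)) (Set.Ioc (0:ℝ) 1) volume :=
      integrableOn_const measure_Ioc_lt_top.ne
    calc ∫ t in Set.Ioc (0:ℝ) 1, ‖F k t‖
        ≤ ∫ _t in Set.Ioc (0:ℝ) 1, ((k:ℝ)+2)^2 * (1/4)^(k+1) :=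
          setIntegral_mono_on ((hF_int k).norm) hconst measurableSet_Ioc (hbound k)
      _ = ((k:ℝ)+2)^2 * (1/4)^(k+1) := by
          rw [setIntegral_const]
          simp [Real.volume_Ioc]
  rw [MeasureTheory.integral_tsum_of_summable_integral_norm hF_int hF_sum]
  have hcong : ∀ t ∈ Set.Ioc (0:ℝ) 1, (∑' k, F k t) = gg t :=
    fun t ht => (hasSum_F ht.1.le ht.2).tsum_eq
  rw [setIntegral_congr_fun measurableSet_Ioc hcong,
    ← intervalIntegral.integral_of_le (by norm_num : (0:ℝ) ≤ 1), integral_gg]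
end
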